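/- Let A be an associative unital ℂ-algebra, let a, q_1, …, q_n ∈ A with n ≥ 1, let i ≥ 1 be an integer, and let i_1, …, i_n ≥ 0 be integers. Then [a^{i_1} q_1 a^{i_2} q_2 ⋯ a^{i_n} q_n, a^i] − [a^{i_1 + i_2 + ⋯ + i_n} q_1 q_2 ⋯ q_n, a^i] lies in L_3(A); that is, [a^{i_1} q_1 a^{i_2} q_2 ⋯ a^{i_n} q_n, a^i] = [a^{Σ_k i_k} q_1 q_2 ⋯ q_n, a^i] holds in B_2(A) = L_2(A)/L_3(A). -/
import Mathlib


noncomputable section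

/-- Lower central series of an associative unital ℂ-algebra: `lcs A i` is `L_{i+1}(A)`,
so `lcs A 0 = L₁(A) = A` and `L_{i+2}(A)` is the ℂ-linear span of all
`[a,u] = a*u - u*a` with `u ∈ L_{i+1}(A)`. -/
def lcs (A : Type*) [Ring A] [Algebra ℂ A] : ℕ → Submodule ℂ A
  | 0 => ⊤
  | n + 1 => Submodule.span ℂ {x | ∃ a u, u ∈ lcs A n ∧ x = a * u - u * a}

section Aux

variable {A : Type*} [Ring A] [Algebra ℂ A]

lemma mem_lcs1 (x y : A) : x * y - y * x ∈ lcs A 1 := by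
  apply Submodule.subset_span
  exact ⟨x, y, by rw [lcs]; trivial, rfl⟩

lemma mem_lcs2 (x : A) {u : A} (hu : u ∈ lcs A 1) : x * u - u * x ∈ lcs A 2 :=
  Submodule.subset_span ⟨x, u, hu, rfl⟩

lemma mem_lcs2' (x : A) {u : A} (hu : u ∈ lcs A 1) : u * x - x * u ∈ lcs A 2 := by
  have := Submodule.neg_mem _ (mem_lcs2 x hu)
  simpa using this

/-- key1: swapping `w*a ↔ a*w` under the bracket with `a^i`, mod `L₃`. -/
lemma key1 (a : A) (i : ℕ) (w : A) :
    ((w * a) * a ^ i - a ^ i * (w * a)) - ((a * w) * a ^ i - a ^ i * (a * w)) ∈ lcs A 2 := by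
  have ht : w * a - a * w ∈ lcs A 1 := mem_lcs1 w a
  have := mem_lcs2' (a ^ i) ht
  convert this using 1
  noncomm_ring

/-- key2: moving a middle `a` to the right end under the bracket, mod `L₃`. -/
lemma key2 (a : A) (i : ℕ) (u v : A) :
    ((u * a * v) * a ^ i - a ^ i * (u * a * v))
      - ((u * (v * a)) * a ^ i - a ^ i * (u * (v * a))) ∈ lcs A 2 := by
  set s : A := a * v - v * a with hs
  have hsL2 : s ∈ lcs A 1 := mem_lcs1 a v
  have ht : s * a ^ i ∈ lcs A 1 := by
    have h : s * a ^ i = a * (v * a ^ i) - (v * a ^ i) * a := by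
      rw [hs, sub_mul, mul_assoc, mul_assoc, mul_assoc, ← pow_succ', pow_succ]
    rw [h]; exact mem_lcs1 a (v * a ^ i)
  have h1 : u * (s * a ^ i) - (s * a ^ i) * u ∈ lcs A 2 := mem_lcs2 u ht
  have h2 : (s * (a ^ i * u) - (a ^ i * u) * s) ∈ lcs A 2 := mem_lcs2' (a ^ i * u) hsL2
  have := Submodule.add_mem _ h1 h2
  convert this using 1
  rw [hs]
  noncomm_ring

/-- move: `u * a^m * v ≡ a^m * (u*v)` under the bracket with `a^i`, mod `L₃`. -/
lemma move (a : A) (i : ℕ) (m : ℕ) :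
    ∀ u v : A,
    ((u * a ^ m * v) * a ^ i - a ^ i * (u * a ^ m * v))
      - ((a ^ m * (u * v)) * a ^ i - a ^ i * (a ^ m * (u * v))) ∈ lcs A 2 := by
  induction m with
  | zero => intro u v; simp
  | succ m ih =>
    intro u v
    have h1 := ih (u * a) v
    have h2 := key2 a i (a ^ m * u) v
    have h3 := key1 a i ((a ^ m * u) * v)
    have hsum := Submodule.add_mem _ (Submodule.add_mem _ h1 h2) h3
    convert hsum using 1
    rw [pow_succ']
    generalize a ^ m = b
    generalize a ^ i = c
    noncomm_ring

/-- Main list induction: pulling all powers of `a` to the front, mod `L₃`. -/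
lemma main (a : A) (i : ℕ) (q : ℕ → A) (e : ℕ → ℕ) :
    ∀ (l : List ℕ) (u : A),
    ((u * (l.map (fun k => a ^ e k * q k)).prod) * a ^ i
        - a ^ i * (u * (l.map (fun k => a ^ e k * q k)).prod))
      - ((a ^ ((l.map e).sum) * (u * (l.map q).prod)) * a ^ i
        - a ^ i * (a ^ ((l.map e).sum) * (u * (l.map q).prod))) ∈ lcs A 2 := by
  intro l
  induction l with
  | nil => intro u; simp
  | cons k l ih =>
    intro u
    have h1 := move a i (e k) u (q k * (l.map (fun k => a ^ e k * q k)).prod)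
    have h2 := ih ((a ^ e k * u) * q k)
    have h3 := move a i (e k) (a ^ ((l.map e).sum)) ((u * q k) * (l.map q).prod)
    have hsum := Submodule.add_mem _ (Submodule.add_mem _ h1 h2) h3
    convert hsum using 1
    simp only [List.map_cons, List.prod_cons, List.sum_cons, pow_add]
    generalize a ^ e k = b
    generalize a ^ i = c
    generalize a ^ (l.map e).sum = d
    generalize (l.map (fun k => a ^ e k * q k)).prod = P
    generalize (l.map q).prod = Q
    noncomm_ring

lemma icc_sum_eq (e : ℕ → ℕ) (n : ℕ) :
    ∑ k ∈ Finset.Icc 1 n, e k = ((List.range' 1 n).map e).sum := by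
  induction n with
  | zero => simp
  | succ n ih =>
    rw [Finset.sum_Icc_succ_top (by omega), List.range'_concat]
    simp [ih, Nat.add_comm 1 n]

end Aux

/-- in an associative unital ℂ-algebra A, for a, q_1, …, q_n ∈ A (n ≥ 1),
i ≥ 1 and i_1, …, i_n ≥ 0, the element
[a^{i_1} q_1 a^{i_2} q_2 ⋯ a^{i_n} q_n, a^i] − [a^{i_1+⋯+i_n} q_1 q_2 ⋯ q_n, a^i]
lies in L₃(A); that is, the two brackets agree in B₂(A) = L₂(A)/L₃(A).
Here a^{i_1} q_1 ⋯ a^{i_n} q_n is the product over k = 1, …, n of a^{i_k}·q_k. -/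
theorem stmt11 {A : Type*} [Ring A] [Algebra ℂ A] (n : ℕ) (hn : 1 ≤ n)
    (a : A) (q : ℕ → A) (i : ℕ) (hi : 1 ≤ i) (e : ℕ → ℕ) :
    (((List.range' 1 n).map (fun k => a ^ e k * q k)).prod * a ^ i
        - a ^ i * ((List.range' 1 n).map (fun k => a ^ e k * q k)).prod)
      - ((a ^ (∑ k ∈ Finset.Icc 1 n, e k) * ((List.range' 1 n).map q).prod) * a ^ i
        - a ^ i * (a ^ (∑ k ∈ Finset.Icc 1 n, e k) * ((List.range' 1 n).map q).prod))
      ∈ lcs A 2 := by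
  have h := main a i q e (List.range' 1 n) 1
  rw [icc_sum_eq]
  simpa using h
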